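/- Let the subgroup H of (S¹)^{h+1} be the kernel of the homomorphism λ ↦ ∏ⱼ λⱼ^{ξⱼ} for some ξ ∈ ℤ^{h+1}, ξ ≠ 0. A monomial Q(z) = ∏ᵢ zᵢ^{jᵢ} z̄ᵢ^{kᵢ} on ℂ^{h+1} is invariant under the natural H-action if and only if the vector (j₀−k₀, …, j_h−k_h) is an integer multiple of ξ. -/

import Mathlib

open Complex Real

private lemma circle_coe_pow (z : Circle) (m : ℕ) :
    ((z ^ m : Circle) : ℂ) = (z : ℂ) ^ m := by
  induction m with
  | zero => simp
  | succ m ih => rw [pow_succ, pow_succ, Circle.coe_mul, ih]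

private lemma circle_coe_zpow (z : Circle) (c : ℤ) :
    ((z ^ c : Circle) : ℂ) = (z : ℂ) ^ c := by
  cases c with
  | ofNat m => simpa using circle_coe_pow z m
  | negSucc m => rw [zpow_negSucc, zpow_negSucc, Circle.coe_inv, circle_coe_pow]

private lemma circle_exp_zpow (θ : ℝ) (c : ℤ) :
    Circle.exp θ ^ c = Circle.exp (c * θ) := by
  ext
  rw [circle_coe_zpow, Circle.coe_exp, Circle.coe_exp, ← Complex.exp_int_mul]
  congr 1
  push_cast
  ring

private lemma circle_exp_sum {n : ℕ} (f : Fin n → ℝ) :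
    Circle.exp (∑ i, f i) = ∏ i, Circle.exp (f i) := by
  induction n with
  | zero => simp
  | succ n ih =>
      rw [Fin.sum_univ_succ, Fin.prod_univ_succ, Circle.exp_add, ih]

private lemma circle_prod_iff {n : ℕ} (θ : Fin n → ℝ) (c : Fin n → ℤ) :
    (∏ i, Circle.exp (θ i) ^ c i) = 1 ↔
      ∃ m : ℤ, ∑ i, (c i : ℝ) * θ i = m * (2 * π) := by
  simp_rw [circle_exp_zpow]
  rw [← circle_exp_sum, Circle.exp_eq_one]

private lemma circle_coe_prod {n : ℕ} (f : Fin n → Circle) :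
    ((∏ i, f i : Circle) : ℂ) = ∏ i, (f i : ℂ) := by
  induction n with
  | zero => simp
  | succ n ih => rw [Fin.prod_univ_succ, Fin.prod_univ_succ, Circle.coe_mul, ih]

private lemma sum_mul_single {n : ℕ} (c : Fin n → ℝ) (a : Fin n) (x : ℝ) :
    ∑ i, c i * (Pi.single a x : Fin n → ℝ) i = c a * x := by
  rw [Finset.sum_eq_single a]
  · simp
  · intro b _ hb; simp [Pi.single_eq_of_ne hb]
  · simp

/-- let `H ⊆ (S¹)^{h+1}` be the kernel of `λ ↦ ∏ⱼ λⱼ^{ξⱼ}` for a non-zero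
`ξ ∈ ℤ^{h+1}`. The monomial `Q(z) = ∏ᵢ zᵢ^{jᵢ} z̄ᵢ^{kᵢ}` is invariant under the natural
coordinatewise `H`-action on `ℂ^{h+1}` if and only if `(j₀−k₀,…,j_h−k_h)` is an integer
multiple of `ξ`. -/
theorem monomial_invariant_iff_multiple
    (h : ℕ) (ξ : Fin (h + 1) → ℤ) (hξ : ξ ≠ 0)
    (H : Subgroup (Fin (h + 1) → Circle))
    (hker : ∀ l : Fin (h + 1) → Circle, l ∈ H ↔ ∏ i, l i ^ ξ i = 1)
    (j k : Fin (h + 1) → ℕ) :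
    (∀ l ∈ H, ∀ z : Fin (h + 1) → ℂ,
        (∏ i, ((l i : ℂ) * z i) ^ j i * (starRingEnd ℂ) ((l i : ℂ) * z i) ^ k i) =
          ∏ i, (z i) ^ j i * (starRingEnd ℂ) (z i) ^ k i) ↔
      ∃ m : ℤ, ∀ i, (j i : ℤ) - (k i : ℤ) = m * ξ i := by
  classical
  set η : Fin (h + 1) → ℤ := fun i => (j i : ℤ) - (k i : ℤ) with hη
  constructor
  · intro hinv
    -- main analytic consequence
    have main : ∀ θ : Fin (h + 1) → ℝ,
        (∃ p : ℤ, ∑ i, (ξ i : ℝ) * θ i = p * (2 * π)) →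
        ∃ m : ℤ, ∑ i, (η i : ℝ) * θ i = m * (2 * π) := by
      intro θ hp
      set l : Fin (h + 1) → Circle := fun i => Circle.exp (θ i) with hl
      have hlH : l ∈ H := (hker l).mpr ((circle_prod_iff θ ξ).mpr hp)
      have h1 := hinv l hlH (fun _ => 1)
      simp only [mul_one, map_one, one_pow, Finset.prod_const_one] at h1
      have h2 : ∀ i, ((l i : ℂ)) ^ j i * (starRingEnd ℂ) (l i : ℂ) ^ k i
          = Complex.exp ((((η i : ℝ) * θ i : ℝ) : ℂ) * I) := by
        intro i
        simp only [hl, Circle.coe_exp]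
        rw [← Complex.exp_conj, ← Complex.exp_nat_mul, ← Complex.exp_nat_mul,
          ← Complex.exp_add]
        congr 1
        simp only [map_mul, Complex.conj_ofReal, Complex.conj_I, hη]
        push_cast
        ring
      rw [Finset.prod_congr rfl (fun i _ => h2 i), ← Complex.exp_sum] at h1
      have h3 : Complex.exp (((∑ i, (η i : ℝ) * θ i : ℝ) : ℂ) * I) = 1 := by
        rw [← h1]; congr 1; push_cast [Finset.sum_mul]; ring
      have h4 : Circle.exp (∑ i, (η i : ℝ) * θ i) = 1 :=
        Circle.coe_eq_one.mp (by rw [Circle.coe_exp]; exact h3)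
      exact Circle.exp_eq_one.mp h4
    -- cross products
    have cross : ∀ a b, η a * ξ b = η b * ξ a := by
      intro a b
      rcases eq_or_ne a b with rfl | hab
      · ring
      by_contra hc
      set c : ℤ := η a * ξ b - η b * ξ a with hcdef
      have hc0 : (c : ℝ) ≠ 0 := by
        simpa [hcdef, sub_eq_zero] using fun hcc => hc (by exact_mod_cast hcc)
      set t : ℝ := π / c with ht
      set θ : Fin (h + 1) → ℝ :=
        Pi.single a ((ξ b : ℝ) * t) + Pi.single b (-(ξ a : ℝ) * t) with hθ
      have hsum : ∀ d : Fin (h + 1) → ℤ, ∑ i, (d i : ℝ) * θ i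
          = (d a : ℝ) * ((ξ b : ℝ) * t) + (d b : ℝ) * (-(ξ a : ℝ) * t) := by
        intro d
        simp only [hθ, Pi.add_apply, mul_add, Finset.sum_add_distrib]
        rw [sum_mul_single, sum_mul_single]
      have hmem : ∃ p : ℤ, ∑ i, (ξ i : ℝ) * θ i = p * (2 * π) := by
        refine ⟨0, ?_⟩
        rw [hsum]; push_cast; ring
      obtain ⟨m, hm⟩ := main θ hmem
      rw [hsum] at hm
      have hval : (c : ℝ) * t = m * (2 * π) := by
        rw [← hm]
        have : (c : ℝ) = (η a : ℝ) * (ξ b : ℝ) - (η b : ℝ) * (ξ a : ℝ) := by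
          rw [hcdef]; push_cast; ring
        rw [this]; ring
      rw [ht, mul_div_cancel₀ _ hc0] at hval
      have : (1 : ℝ) = m * 2 := by
        have h7 : (1 : ℝ) * π = ((m : ℝ) * 2) * π := by linear_combination hval
        exact mul_right_cancel₀ Real.pi_ne_zero h7
      have : (1 : ℤ) = m * 2 := by exact_mod_cast this
      omega
    -- the scaling element
    obtain ⟨i0, hi0⟩ : ∃ i, ξ i ≠ 0 := Function.ne_iff.mp hξ
    set S : ℤ := ∑ i, ξ i * ξ i with hSdef
    have hSpos : 0 < S := by
      refine Finset.sum_pos' (fun i _ => mul_self_nonneg _)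
        ⟨i0, Finset.mem_univ _, mul_self_pos.mpr hi0⟩
    have hS0 : (S : ℝ) ≠ 0 := by exact_mod_cast hSpos.ne'
    set θ : Fin (h + 1) → ℝ := fun i => (ξ i : ℝ) * (2 * π / S) with hθ
    have hmem : ∃ p : ℤ, ∑ i, (ξ i : ℝ) * θ i = p * (2 * π) := by
      refine ⟨1, ?_⟩
      simp only [hθ]
      simp_rw [← mul_assoc]
      rw [← Finset.sum_mul]
      have : (∑ i, (ξ i : ℝ) * (ξ i : ℝ)) = (S : ℝ) := by push_cast [hSdef]; ring
      rw [this]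
      field_simp
      norm_num
    obtain ⟨m, hm⟩ := main θ hmem
    refine ⟨m, fun i => ?_⟩
    -- from hm : ∑ η i * (ξ i * (2π/S)) = m * 2π  deduce ∑ η ξ = m S
    have hsum : (∑ i, η i * ξ i : ℤ) = m * S := by
      have hm' : ∑ i, (η i : ℝ) * θ i = (∑ i, (η i : ℝ) * (ξ i : ℝ)) * (2 * π / S) := by
        simp only [hθ]
        rw [Finset.sum_mul]
        exact Finset.sum_congr rfl fun i _ => by ring
      have h5 : (∑ i, (η i : ℝ) * (ξ i : ℝ)) * (2 * π / S) = m * (2 * π) := by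
        rw [← hm', hm]
      have h6 : (∑ i, (η i : ℝ) * (ξ i : ℝ)) = m * S := by
        have hπ := Real.pi_pos
        field_simp at h5
        nlinarith [h5]
      exact_mod_cast h6
    -- now conclude η i = m * ξ i
    have key : η i * S = m * ξ i * S := by
      have e1 : η i * S = ξ i * ∑ b, η b * ξ b := by
        rw [hSdef, Finset.mul_sum, Finset.mul_sum]
        refine Finset.sum_congr rfl fun b _ => ?_
        linear_combination (ξ b : ℤ) * cross i b
      rw [e1, hsum]; ring
    have := mul_right_cancel₀ (by exact_mod_cast hSpos.ne' : (S : ℤ) ≠ 0) key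
    simpa [hη] using this
  · rintro ⟨m, hm⟩ l hl z
    have hl1 : (∏ i, (l i : ℂ) ^ ξ i) = 1 := by
      have h1 := (hker l).mp hl
      have h2 : ((∏ i, l i ^ ξ i : Circle) : ℂ) = 1 := by rw [h1]; rfl
      rw [← h2, circle_coe_prod]
      exact Finset.prod_congr rfl fun i _ => (circle_coe_zpow (l i) (ξ i)).symm
    have hfac : ∀ i, ((l i : ℂ) * z i) ^ j i * (starRingEnd ℂ) ((l i : ℂ) * z i) ^ k i
        = ((l i : ℂ) ^ ξ i) ^ m * ((z i) ^ j i * (starRingEnd ℂ) (z i) ^ k i) := by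
      intro i
      have hne : (l i : ℂ) ≠ 0 := Circle.coe_ne_zero _
      have hconj : (starRingEnd ℂ) (l i : ℂ) = (l i : ℂ)⁻¹ :=
        (Circle.coe_inv_eq_conj (l i)).symm
      rw [mul_pow, map_mul, mul_pow, hconj, inv_pow, ← zpow_natCast ((l i : ℂ)) (j i),
        ← zpow_natCast ((l i : ℂ)) (k i), ← zpow_neg]
      rw [show (l i : ℂ) ^ (j i : ℤ) * z i ^ j i *
            ((l i : ℂ) ^ (-(k i : ℤ)) * (starRingEnd ℂ) (z i) ^ k i)
          = ((l i : ℂ) ^ (j i : ℤ) * (l i : ℂ) ^ (-(k i : ℤ)))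
            * (z i ^ j i * (starRingEnd ℂ) (z i) ^ k i) from by ring]
      rw [← zpow_add₀ hne,
        show (j i : ℤ) + -(k i : ℤ) = ξ i * m from by rw [← sub_eq_add_neg, hm i]; ring,
        zpow_mul]
    calc (∏ i, ((l i : ℂ) * z i) ^ j i * (starRingEnd ℂ) ((l i : ℂ) * z i) ^ k i)
        = ∏ i, ((l i : ℂ) ^ ξ i) ^ m * ((z i) ^ j i * (starRingEnd ℂ) (z i) ^ k i) :=
          Finset.prod_congr rfl fun i _ => hfac i
      _ = (∏ i, ((l i : ℂ) ^ ξ i) ^ m) * ∏ i, ((z i) ^ j i * (starRingEnd ℂ) (z i) ^ k i) :=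
          Finset.prod_mul_distrib
      _ = ((∏ i, (l i : ℂ) ^ ξ i) ^ m) * ∏ i, ((z i) ^ j i * (starRingEnd ℂ) (z i) ^ k i) := by
          rw [Finset.prod_zpow]
      _ = ∏ i, ((z i) ^ j i * (starRingEnd ℂ) (z i) ^ k i) := by rw [hl1, one_zpow, one_mul]
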